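/- arXiv:2410.17211 — 2 statements merged into one kernel-verified Lean document; each statement's English description precedes it below -/
import Mathlib

section
/- Fix γ ∈ (0,1] and τ > 0. There exists a family of functions L^ξ : ℝⁿ → iℝ indexed by ξ ∈ ℤⁿ (with L^0 = 0) such that: (i) |L^ξ(ω)| ≤ γ^{-1}|ξ|^τ for all ω ∈ ℝⁿ and ξ ≠ 0; (ii) |L^ξ(ω₁) − L^ξ(ω₂)| ≤ γ^{-2}|ξ|^{2τ+1}|ω₁−ω₂| for all ω₁,ω₂ ∈ ℝⁿ; (iii) L^ξ(ω) = 1/(i ω·ξ) whenever ω ∈ Dio(γ,τ) and ξ ≠ 0; (iv) L^{−ξ}(ω) = −L^ξ(ω) for all ξ and ω. -/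

noncomputable def trunc (ε x : ℝ) : ℝ := x / max (ε^2) (x^2)

lemma trunc_odd (ε x : ℝ) : trunc ε (-x) = - trunc ε x := by
  simp [trunc, neg_div]

lemma abs_le_of_sq (a b : ℝ) (hb : 0 ≤ b) (h : a^2 ≤ b^2) : |a| ≤ b := by
  nlinarith [sq_abs a, abs_nonneg a]

lemma trunc_abs_le (ε : ℝ) (hε : 0 < ε) (x : ℝ) : |trunc ε x| ≤ 1/ε := by
  have hm : (0:ℝ) < max (ε^2) (x^2) := lt_max_of_lt_left (by positivity)
  rw [trunc, abs_div, abs_of_pos hm, div_le_div_iff₀ hm hε]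
  rcases le_total (x^2) (ε^2) with h | h
  · rw [max_eq_left h]
    have hx := abs_le_of_sq x ε hε.le h
    nlinarith [sq_abs x, abs_nonneg x]
  · rw [max_eq_right h]
    have hx : ε ≤ |x| := by nlinarith [sq_abs x, abs_nonneg x]
    nlinarith [sq_abs x, abs_nonneg x]

lemma trunc_eq (ε x : ℝ) (hε : 0 < ε) (h : ε ≤ |x|) : trunc ε x = 1/x := by
  have hx : x ≠ 0 := by intro h0; simp [h0] at h; linarith
  have : max (ε^2) (x^2) = x^2 := max_eq_right (by nlinarith [sq_abs x])
  rw [trunc, this, pow_two]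
  field_simp

lemma core (ε x y : ℝ) (hε : 0 < ε) (hx : |x| ≤ ε) (hy : ε ≤ |y|) :
    |x*y - ε^2| ≤ |x - y| * |y| := by
  have h1 : x*y ≤ ε * |y| := by
    calc x*y ≤ |x*y| := le_abs_self _
    _ = |x| * |y| := abs_mul x y
    _ ≤ ε * |y| := by nlinarith [abs_nonneg y]
  have hB1 : x*y - y^2 ≤ |x*y - y^2| := le_abs_self _
  have hB2 : y^2 - x*y ≤ |x*y - y^2| := by rw [abs_sub_comm]; exact le_abs_self _
  have h3 : |x*y - ε^2| ≤ |x*y - y^2| := by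
    rw [abs_le]
    constructor
    · nlinarith [sq_abs y, sq_nonneg (ε - |y|)]
    · nlinarith [sq_abs y, sq_nonneg (ε - |y|)]
  calc |x*y - ε^2| ≤ |x*y - y^2| := h3
  _ = |(x-y)*y| := by ring_nf
  _ = |x-y| * |y| := abs_mul _ _

lemma trunc_lip (ε : ℝ) (hε : 0 < ε) (x y : ℝ) :
    |trunc ε x - trunc ε y| ≤ |x - y| / ε^2 := by
  have hmx : (0:ℝ) < max (ε^2) (x^2) := lt_max_of_lt_left (by positivity)
  have hmy : (0:ℝ) < max (ε^2) (y^2) := lt_max_of_lt_left (by positivity)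
  have hε2 : (0:ℝ) < ε^2 := pow_pos hε 2
  unfold trunc
  rw [div_sub_div _ _ hmx.ne' hmy.ne', abs_div, abs_of_pos (mul_pos hmx hmy),
    div_le_div_iff₀ (mul_pos hmx hmy) hε2,
    show x * max (ε^2) (y^2) - max (ε^2) (x^2) * y
       = x * max (ε^2) (y^2) - y * max (ε^2) (x^2) by ring]
  rcases le_total (x^2) (ε^2) with hx | hx <;> rcases le_total (y^2) (ε^2) with hy | hy
  · rw [max_eq_left hx, max_eq_left hy]
    have : |x * ε^2 - y * ε^2| = |x - y| * ε^2 := by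
      rw [← sub_mul, abs_mul, abs_of_pos hε2]
    rw [this]; nlinarith [abs_nonneg (x - y)]
  · rw [max_eq_left hx, max_eq_right hy]
    have hax : |x| ≤ ε := abs_le_of_sq x ε hε.le hx
    have hay : ε ≤ |y| := by nlinarith [sq_abs y, abs_nonneg y]
    have h1 : |x * y^2 - y * ε^2| = |y| * |x*y - ε^2| := by
      rw [← abs_mul]; ring_nf
    have h2 := core ε x y hε hax hay
    calc |x * y^2 - y * ε^2| * ε^2 = |y| * |x*y - ε^2| * ε^2 := by rw [h1]
    _ ≤ |y| * (|x - y| * |y|) * ε^2 :=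
        mul_le_mul_of_nonneg_right (mul_le_mul_of_nonneg_left h2 (abs_nonneg y)) hε2.le
    _ = |x - y| * ((|y| * |y|) * ε^2) := by ring
    _ = |x - y| * (ε^2 * y^2) := by rw [abs_mul_abs_self, ← pow_two]; ring
  · rw [max_eq_right hx, max_eq_left hy]
    have hay : |y| ≤ ε := abs_le_of_sq y ε hε.le hy
    have hax : ε ≤ |x| := by nlinarith [sq_abs x, abs_nonneg x]
    have h1 : |x * ε^2 - y * x^2| = |x| * |y*x - ε^2| := by
      rw [← abs_mul, abs_sub_comm]; ring_nf
    have h2 := core ε y x hε hay hax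
    calc |x * ε^2 - y * x^2| * ε^2 = |x| * |y*x - ε^2| * ε^2 := by rw [h1]
    _ ≤ |x| * (|y - x| * |x|) * ε^2 :=
        mul_le_mul_of_nonneg_right (mul_le_mul_of_nonneg_left h2 (abs_nonneg x)) hε2.le
    _ = |y - x| * ((|x| * |x|) * ε^2) := by ring
    _ = |x - y| * (x^2 * ε^2) := by rw [abs_mul_abs_self, ← pow_two, abs_sub_comm]
  · rw [max_eq_right hx, max_eq_right hy]
    have hax : ε ≤ |x| := by nlinarith [sq_abs x, abs_nonneg x]
    have hay : ε ≤ |y| := by nlinarith [sq_abs y, abs_nonneg y]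
    have h1 : |x * y^2 - y * x^2| = |x - y| * (|x| * |y|) := by
      rw [show x * y^2 - y * x^2 = -((x - y) * (x * y)) by ring, abs_neg, abs_mul, abs_mul]
    rw [h1]
    have h3 : |x| * |y| * ε^2 ≤ x^2 * y^2 := by
      nlinarith [sq_abs x, sq_abs y, mul_le_mul hax hay hε.le (abs_nonneg x),
        mul_nonneg (abs_nonneg x) (abs_nonneg y)]
    calc |x - y| * (|x| * |y|) * ε^2 = |x - y| * (|x| * |y| * ε^2) := by ring
    _ ≤ |x - y| * (x^2 * y^2) := mul_le_mul_of_nonneg_left h3 (abs_nonneg _)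

lemma abs_sum_mul_le (ι : Type*) [Fintype ι] (f g : ι → ℝ) :
    |∑ i, f i * g i| ≤ Real.sqrt (∑ i, f i ^ 2) * Real.sqrt (∑ i, g i ^ 2) := by
  rcases abs_cases (∑ i, f i * g i) with ⟨e, _⟩ | ⟨e, _⟩ <;> rw [e]
  · exact Real.sum_mul_le_sqrt_mul_sqrt Finset.univ f g
  · have h := Real.sum_mul_le_sqrt_mul_sqrt Finset.univ (fun i => -f i) g
    simp only [neg_mul, neg_sq, Finset.sum_neg_distrib] at h
    linarith

/-- Extension of the small-divisor Fourier multipliers `1/(iω·ξ)` from the Diophantine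
set to all of ℝⁿ, purely imaginary valued, with preserved bounds and Lipschitz
constants, odd in ξ. -/
theorem stmt3 (n : ℕ) (γ τ : ℝ) (hγ0 : 0 < γ) (hγ1 : γ ≤ 1) (hτ : 0 < τ) :
    ∃ L : (Fin n → ℤ) → (Fin n → ℝ) → ℂ,
      (∀ ω, L 0 ω = 0) ∧
      (∀ ξ ω, (L ξ ω).re = 0) ∧
      (∀ ξ : Fin n → ℤ, ξ ≠ 0 → ∀ ω,
        ‖L ξ ω‖ ≤ γ⁻¹ * (Real.sqrt (∑ i, ((ξ i : ℝ)) ^ 2)) ^ τ) ∧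
      (∀ ξ : Fin n → ℤ, ∀ ω₁ ω₂ : Fin n → ℝ,
        ‖L ξ ω₁ - L ξ ω₂‖ ≤
          γ⁻¹ ^ 2 * (Real.sqrt (∑ i, ((ξ i : ℝ)) ^ 2)) ^ (2 * τ + 1) *
            Real.sqrt (∑ i, (ω₁ i - ω₂ i) ^ 2)) ∧
      (∀ ξ : Fin n → ℤ, ξ ≠ 0 → ∀ ω : Fin n → ℝ,
        (∀ ζ : Fin n → ℤ, ζ ≠ 0 →
          γ / (Real.sqrt (∑ i, ((ζ i : ℝ)) ^ 2)) ^ τ ≤ |∑ i, ω i * (ζ i : ℝ)|) →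
        L ξ ω = 1 / (Complex.I * ((∑ i, ω i * (ξ i : ℝ) : ℝ) : ℂ))) ∧
      (∀ ξ ω, L (-ξ) ω = - L ξ ω) := by
  classical
  set N : (Fin n → ℤ) → ℝ := fun ξ => Real.sqrt (∑ i, ((ξ i : ℝ)) ^ 2) with hNdef
  set ε : (Fin n → ℤ) → ℝ := fun ξ => γ / (N ξ) ^ τ with hεdef
  have hN0 : ∀ ξ : Fin n → ℤ, ξ ≠ 0 → 0 < N ξ := by
    intro ξ hξ
    obtain ⟨i, hi⟩ := Function.ne_iff.mp hξ
    apply Real.sqrt_pos.mpr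
    apply Finset.sum_pos' (fun j _ => sq_nonneg _)
    refine ⟨i, Finset.mem_univ i, ?_⟩
    have : (ξ i : ℝ) ≠ 0 := Int.cast_ne_zero.mpr hi
    positivity
  have hNnonneg : ∀ ξ : Fin n → ℤ, 0 ≤ N ξ := fun ξ => Real.sqrt_nonneg _
  have hε0 : ∀ ξ : Fin n → ℤ, ξ ≠ 0 → 0 < ε ξ := fun ξ hξ =>
    div_pos hγ0 (Real.rpow_pos_of_pos (hN0 ξ hξ) τ)
  have hNneg : ∀ ξ : Fin n → ℤ, N (-ξ) = N ξ := by
    intro ξ; simp only [hNdef]; congr 1; apply Finset.sum_congr rfl; intro i _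
    push_cast [Pi.neg_apply]; ring
  refine ⟨fun ξ ω => if ξ = 0 then 0 else
      (-Complex.I) * ((trunc (ε ξ) (∑ i, ω i * (ξ i : ℝ)) : ℝ) : ℂ), ?_, ?_, ?_, ?_, ?_, ?_⟩
  · intro ω; simp
  · intro ξ ω
    by_cases hξ : ξ = 0
    · simp [hξ]
    · simp [hξ, Complex.mul_re]
  · intro ξ hξ ω
    dsimp only
    rw [if_neg hξ]
    rw [norm_mul, norm_neg, Complex.norm_I, one_mul, Complex.norm_real, Real.norm_eq_abs]
    have h1 := trunc_abs_le (ε ξ) (hε0 ξ hξ) (∑ i, ω i * (ξ i : ℝ))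
    have h2 : 1 / ε ξ = γ⁻¹ * (N ξ) ^ τ := by
      rw [hεdef]
      field_simp
    rw [h2] at h1
    exact h1
  · intro ξ ω₁ ω₂
    dsimp only
    by_cases hξ : ξ = 0
    · rw [if_pos hξ, if_pos hξ, sub_zero, norm_zero]
      positivity
    · rw [if_neg hξ, if_neg hξ]
      set z₁ := ∑ i, ω₁ i * (ξ i : ℝ)
      set z₂ := ∑ i, ω₂ i * (ξ i : ℝ)
      have e1 : (-Complex.I) * ((trunc (ε ξ) z₁ : ℝ) : ℂ) - (-Complex.I) * ((trunc (ε ξ) z₂ : ℝ) : ℂ)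
          = (-Complex.I) * (((trunc (ε ξ) z₁ - trunc (ε ξ) z₂ : ℝ) : ℂ)) := by
        push_cast; ring
      rw [e1, norm_mul, norm_neg, Complex.norm_I, one_mul, Complex.norm_real, Real.norm_eq_abs]
      have h1 := trunc_lip (ε ξ) (hε0 ξ hξ) z₁ z₂
      have hz : z₁ - z₂ = ∑ i, (ω₁ i - ω₂ i) * (ξ i : ℝ) := by
        rw [← Finset.sum_sub_distrib]; apply Finset.sum_congr rfl; intro i _; ring
      have hCS : |z₁ - z₂| ≤ Real.sqrt (∑ i, (ω₁ i - ω₂ i) ^ 2) * N ξ := by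
        rw [hz]; exact abs_sum_mul_le _ _ _
      set D := Real.sqrt (∑ i, (ω₁ i - ω₂ i) ^ 2) with hD
      have hDnn : 0 ≤ D := Real.sqrt_nonneg _
      have hNp := hN0 ξ hξ
      have hNτ : (0:ℝ) < (N ξ) ^ τ := Real.rpow_pos_of_pos hNp τ
      have hgoal : γ⁻¹ ^ 2 * (N ξ) ^ (2 * τ + 1) * D = D * N ξ / (ε ξ)^2 := by
        have e2 : (N ξ) ^ (2 * τ + 1) = (N ξ) ^ τ * (N ξ) ^ τ * N ξ := by
          rw [Real.rpow_add hNp, Real.rpow_one, show 2 * τ = τ + τ by ring,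
            Real.rpow_add hNp]
        rw [e2, hεdef]
        field_simp
      rw [hgoal]
      calc |trunc (ε ξ) z₁ - trunc (ε ξ) z₂| ≤ |z₁ - z₂| / (ε ξ)^2 := h1
      _ ≤ (D * N ξ) / (ε ξ)^2 := by gcongr
  · intro ξ hξ ω hdio
    dsimp only
    rw [if_neg hξ]
    set z := ∑ i, ω i * (ξ i : ℝ) with hzdef
    have hdz : ε ξ ≤ |z| := hdio ξ hξ
    have hzne : z ≠ 0 := by
      intro h0; rw [h0, abs_zero] at hdz; linarith [hε0 ξ hξ]
    rw [trunc_eq (ε ξ) z (hε0 ξ hξ) hdz]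
    have hzC : ((z : ℝ) : ℂ) ≠ 0 := Complex.ofReal_ne_zero.mpr hzne
    have hI : Complex.I * (z : ℂ) ≠ 0 := mul_ne_zero Complex.I_ne_zero hzC
    push_cast
    rw [one_div (Complex.I * (z:ℂ)), mul_inv, Complex.inv_I, one_div]
  · intro ξ ω
    by_cases hξ : ξ = 0
    · simp [hξ]
    · have hξ' : -ξ ≠ 0 := fun h => hξ (by simpa [neg_eq_zero] using h)
      dsimp only
      rw [if_neg hξ', if_neg hξ]
      have hz : (∑ i, ω i * (((-ξ) i : ℤ) : ℝ)) = -(∑ i, ω i * ((ξ i : ℤ) : ℝ)) := by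
        rw [← Finset.sum_neg_distrib]; apply Finset.sum_congr rfl; intro i _
        push_cast [Pi.neg_apply]; ring
      rw [show ε (-ξ) = ε ξ by rw [hεdef]; simp only; rw [hNneg]]
      rw [hz, trunc_odd]
      push_cast
      ring
end

section
/- Let χ(x) = x + θ(x) be a map on 𝕋ⁿ with θ ∈ C¹, sup_x|∂_xθ| ≤ 0.99, let Θ(τ,x) = τ e^{−(1−τ)⟨D_x⟩}θ(x), and define the deformation vector field X(τ,x) = −(Iₙ + ∂_xΘ(τ,x))^{-1} ∂_τΘ(τ,x). Then for any f ∈ C¹(𝕋ⁿ), the deformation f^♯(τ,x) := f(x + Θ(τ,x)) solves the transport equation ∂_τ f^♯ + X·∇_x f^♯ = 0 on [0,1] × 𝕋ⁿ, with f^♯(0,x) = f(x) and f^♯(1,x) = f(χ(x)). -/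
/-- Partial derivative of a scalar function on ℝⁿ. -/
noncomputable def pd {n : ℕ} (f : (Fin n → ℝ) → ℝ) (i : Fin n) (x : Fin n → ℝ) : ℝ :=
  deriv (fun s => f (Function.update x i s)) (x i)

/-- Spatial Jacobian matrix of a map ℝⁿ → ℝⁿ. -/
noncomputable def jacM {n : ℕ} (g : (Fin n → ℝ) → (Fin n → ℝ)) (x : Fin n → ℝ) :
    Matrix (Fin n) (Fin n) ℝ :=
  Matrix.of fun a b => pd (fun y => g y a) b x

lemma myHasDerivAt_update {n : ℕ} {φ : (Fin n → ℝ) → ℝ} {L : (Fin n → ℝ) →L[ℝ] ℝ}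
    {x : Fin n → ℝ} (h : HasFDerivAt φ L x) (i : Fin n) :
    HasDerivAt (fun s => φ (Function.update x i s)) (L (Pi.single i 1)) (x i) := by
  have heq : ∀ s, Function.update x i s = x + (s - x i) • (Pi.single i 1 : Fin n → ℝ) := by
    intro s; funext j
    by_cases hj : j = i
    · subst hj; simp [Function.update_self]
    · simp [Function.update_of_ne hj, Pi.single_apply, hj]
  have hinner : HasDerivAt (fun s : ℝ => x + (s - x i) • (Pi.single i 1 : Fin n → ℝ))
      ((1:ℝ) • (Pi.single i 1 : Fin n → ℝ)) (x i) :=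
    (((hasDerivAt_id (x i)).sub_const (x i)).smul_const ((Pi.single i 1 : Fin n → ℝ))).const_add x
  have h' : HasFDerivAt φ L (x + (x i - x i) • (Pi.single i 1 : Fin n → ℝ)) := by
    simpa using h
  have := h'.comp_hasDerivAt (x i) hinner
  simp only [one_smul] at this
  simpa [heq, Function.comp_def] using this

lemma pd_eq {n : ℕ} {φ : (Fin n → ℝ) → ℝ} {L : (Fin n → ℝ) →L[ℝ] ℝ}
    {x : Fin n → ℝ} (h : HasFDerivAt φ L x) (i : Fin n) :
    pd φ i x = L (Pi.single i 1) := (myHasDerivAt_update h i).deriv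

lemma clm_pi_sum {n : ℕ} (M : (Fin n → ℝ) →L[ℝ] ℝ) (v : Fin n → ℝ) :
    M v = ∑ a, v a * M (Pi.single a 1) := by
  have hv : v = ∑ a, v a • (Pi.single a 1 : Fin n → ℝ) := by
    funext j
    simp [Finset.sum_apply, Pi.single_apply]
  conv_lhs => rw [hv]
  simp [map_sum, smul_eq_mul]

attribute [local instance] Matrix.frobeniusNormedAddCommGroup Matrix.frobeniusNormedSpace
  Matrix.frobeniusNormedRing

lemma myUnit {n : ℕ} (J : Matrix (Fin n) (Fin n) ℝ)
    (hJ : Real.sqrt (∑ i, ∑ j, (J j i) ^ 2) ≤ 0.99) :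
    (1 + J) * (1 + J)⁻¹ = 1 := by
  have hnorm : ‖J‖ ≤ 0.99 := by
    rw [Matrix.frobenius_norm_def]
    calc (∑ i, ∑ j, ‖J i j‖ ^ (2:ℝ)) ^ (1/2 : ℝ)
        = Real.sqrt (∑ i, ∑ j, (J j i) ^ 2) := by
          rw [Real.sqrt_eq_rpow, Finset.sum_comm]
          congr 1
          refine Finset.sum_congr rfl fun i _ => Finset.sum_congr rfl fun j _ => ?_
          rw [show ((2:ℝ)) = ((2:ℕ):ℝ) by norm_num, Real.rpow_natCast, Real.norm_eq_abs, sq_abs]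
      _ ≤ 0.99 := hJ
  have hlt : ‖-J‖ < 1 := by rw [norm_neg]; linarith
  have hu : IsUnit (1 + J) := by
    have := (Units.oneSub (-J) hlt).isUnit
    simpa [sub_neg_eq_add] using this
  exact Matrix.mul_nonsing_inv _ (Matrix.isUnit_iff_isUnit_det _ |>.mp hu)

lemma myAlg {n : ℕ} (A : Matrix (Fin n) (Fin n) ℝ) (hA : A * A⁻¹ = 1) (T c : Fin n → ℝ) :
    -(∑ i, (-∑ j, A⁻¹ i j * T j) * (∑ a, A a i * c a)) = ∑ a, T a * c a := by
  simp only [neg_mul, Finset.sum_neg_distrib, neg_neg]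
  calc ∑ i, (∑ j, A⁻¹ i j * T j) * (∑ a, A a i * c a)
      = ∑ i, ∑ a, ∑ j, A a i * A⁻¹ i j * (T j * c a) := by
        refine Finset.sum_congr rfl fun i _ => ?_
        rw [Finset.sum_mul_sum, Finset.sum_comm]
        exact Finset.sum_congr rfl fun a _ => Finset.sum_congr rfl fun j _ => by ring
    _ = ∑ a, ∑ j, (∑ i, A a i * A⁻¹ i j) * (T j * c a) := by
        rw [Finset.sum_comm]
        refine Finset.sum_congr rfl fun a _ => ?_
        rw [Finset.sum_comm]
        refine Finset.sum_congr rfl fun j _ => ?_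
        rw [Finset.sum_mul]
    _ = ∑ a, ∑ j, (1 : Matrix (Fin n) (Fin n) ℝ) a j * (T j * c a) := by
        simp only [← Matrix.mul_apply, hA]
    _ = ∑ a, T a * c a := by
        simp [Matrix.one_apply, mul_comm]

/-- For an isotopy Θ from 0 to θ with Jacobian bound 0.99, and the deformation vector
field X = −(Iₙ + ∂ₓΘ)⁻¹ ∂_τΘ, the deformation f^♯(τ,x) = f(x + Θ(τ,x)) of any C¹
function f solves the transport equation ∂_τ f^♯ + X·∇ₓ f^♯ = 0, and interpolates
between f and f∘χ, χ = Id + θ. -/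
theorem stmt12 (n : ℕ) (θ : (Fin n → ℝ) → (Fin n → ℝ))
    (Θ : ℝ → (Fin n → ℝ) → (Fin n → ℝ))
    (hΘreg : ContDiff ℝ 1 (fun p : ℝ × (Fin n → ℝ) => Θ p.1 p.2))
    (hΘ0 : ∀ x, Θ 0 x = 0)
    (hΘ1 : ∀ x, Θ 1 x = θ x)
    (hΘbd : ∀ τ ∈ Set.Icc (0:ℝ) 1, ∀ x,
      Real.sqrt (∑ i, ∑ j, (pd (fun y => Θ τ y j) i x) ^ 2) ≤ 0.99)
    (X : ℝ → (Fin n → ℝ) → (Fin n → ℝ))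
    (hX : ∀ τ x, X τ x = fun j =>
      -∑ i, ((1 + jacM (Θ τ) x)⁻¹ : Matrix (Fin n) (Fin n) ℝ) j i *
        deriv (fun s => Θ s x i) τ)
    (f : (Fin n → ℝ) → ℝ) (hf : ContDiff ℝ 1 f) :
    (∀ x, f (x + Θ 0 x) = f x) ∧
    (∀ x, f (x + Θ 1 x) = f (x + θ x)) ∧
    (∀ τ ∈ Set.Icc (0:ℝ) 1, ∀ x,
      HasDerivAt (fun s => f (x + Θ s x))
        (-(∑ i, X τ x i * pd (fun y => f (y + Θ τ y)) i x)) τ) := by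
  refine ⟨fun x => by rw [hΘ0, add_zero], fun x => by rw [hΘ1], ?_⟩
  intro τ hτ x
  have hΦd : Differentiable ℝ (fun p : ℝ × (Fin n → ℝ) => Θ p.1 p.2) :=
    hΘreg.differentiable (by norm_num)
  set Φ : ℝ × (Fin n → ℝ) → (Fin n → ℝ) := fun p => Θ p.1 p.2 with hΦdef
  have hK : HasFDerivAt Φ (fderiv ℝ Φ (τ, x)) (τ, x) := (hΦd (τ, x)).hasFDerivAt
  set K := fderiv ℝ Φ (τ, x) with hKdef
  have hfd : Differentiable ℝ f := hf.differentiable (by norm_num)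
  set g : Fin n → ℝ := x + Θ τ x with hgdef
  have hM : HasFDerivAt f (fderiv ℝ f g) g := (hfd g).hasFDerivAt
  set M := fderiv ℝ f g with hMdef
  -- derivative in τ
  have hcurve : HasDerivAt (fun s : ℝ => (s, x)) ((1:ℝ), (0 : Fin n → ℝ)) τ :=
    (hasDerivAt_id τ).prodMk (hasDerivAt_const τ x)
  have hΦs : HasDerivAt (fun s => Φ (s, x)) (K (1, 0)) τ := by
    have := hK.comp_hasDerivAt τ hcurve
    simpa [Function.comp_def] using this
  have hmain : HasDerivAt (fun s => f (x + Θ s x)) (M (K (1, 0))) τ := by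
    have h1 : HasDerivAt (fun s => x + Φ (s, x)) (K (1, 0)) τ := hΦs.const_add x
    exact hM.comp_hasDerivAt τ h1
  -- derivative in x
  set ι : (Fin n → ℝ) →L[ℝ] ℝ × (Fin n → ℝ) :=
    ContinuousLinearMap.prod 0 (ContinuousLinearMap.id ℝ _) with hιdef
  have hKy : HasFDerivAt (fun y => Φ (τ, y)) (K.comp ι) x := by
    have hpair : HasFDerivAt (fun y : Fin n → ℝ => ((τ:ℝ), y)) ι x :=
      (hasFDerivAt_const τ x).prodMk (hasFDerivAt_id x)
    exact hK.comp x hpair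
  have hFy : HasFDerivAt (fun y => f (y + Θ τ y))
      (M.comp (ContinuousLinearMap.id ℝ _ + K.comp ι)) x := by
    have h2 : HasFDerivAt (fun y => y + Φ (τ, y))
        (ContinuousLinearMap.id ℝ _ + K.comp ι) x := (hasFDerivAt_id x).add hKy
    exact hM.comp x h2
  have hpdF : ∀ i, pd (fun y => f (y + Θ τ y)) i x
      = M (Pi.single i 1 + K (0, Pi.single i 1)) := by
    intro i
    rw [pd_eq hFy i]
    simp [hιdef]
  have hJ : ∀ a i, jacM (Θ τ) x a i = K (0, Pi.single i 1) a := by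
    intro a i
    have hproj : HasFDerivAt (fun y => Φ (τ, y) a)
        ((ContinuousLinearMap.proj a : (Fin n → ℝ) →L[ℝ] ℝ).comp (K.comp ι)) x :=
      (ContinuousLinearMap.proj a : (Fin n → ℝ) →L[ℝ] ℝ).hasFDerivAt.comp x hKy
    show pd (fun y => Θ τ y a) i x = _
    rw [pd_eq hproj i]
    simp [hιdef]
  have hT : ∀ i, deriv (fun s => Θ s x i) τ = K (1, 0) i := by
    intro i
    have h3 : HasDerivAt (fun s => Φ (s, x) i) (K (1, 0) i) τ := by
      have := (ContinuousLinearMap.proj i : (Fin n → ℝ) →L[ℝ] ℝ).hasFDerivAt.comp_hasDerivAt τ hΦs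
      simpa [Function.comp_def] using this
    exact h3.deriv
  -- the value identity
  have hAinv : ((1 : Matrix (Fin n) (Fin n) ℝ) + jacM (Θ τ) x)
      * ((1 : Matrix (Fin n) (Fin n) ℝ) + jacM (Θ τ) x)⁻¹ = 1 := by
    refine myUnit _ ?_
    have := hΘbd τ hτ x
    simpa [jacM] using this
  have hMi : ∀ i, M (Pi.single i 1 + K (0, Pi.single i 1))
      = ∑ a, ((1 : Matrix (Fin n) (Fin n) ℝ) + jacM (Θ τ) x) a i * M (Pi.single a 1) := by
    intro i
    rw [clm_pi_sum M]
    refine Finset.sum_congr rfl fun a _ => ?_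
    congr 1
    rw [Matrix.add_apply, Matrix.one_apply, hJ a i]
    simp [Pi.single_apply]
  have hval : -(∑ i, X τ x i * pd (fun y => f (y + Θ τ y)) i x) = M (K (1, 0)) := by
    rw [hX]
    simp only [hpdF, hT, hMi]
    rw [clm_pi_sum M (K (1, 0))]
    exact myAlg _ hAinv (fun j => K (1, 0) j) (fun a => M (Pi.single a 1))
  exact hval ▸ hmain
end
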